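/- Let a ≥ 0, γ > 0, σ_f > 0, μ_f, μ_π ∈ ℝ, β ≥ 0 be fixed. With σ_π²(t) = a + γt²σ_f², σ_c²(t) = σ_π²(t)σ_f²/(σ_π²(t)+σ_f²), μ_c(t) = (σ_c²(t)/σ_π²(t))μ_π + (σ_c²(t)/σ_f²)μ_f, and α(t) = μ_c(t) + √β·σ_c(t), we have α(t) → μ_f + √β·σ_f as t → ∞. -/

import Mathlib

open Filter

/-- Lemma 6 (third claim) of CoExBO: the acquisition `α(t) = μ_c(t) + √β σ_c(t)`
built from the product-Gaussian of surrogate and preference models converges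
pointwise to the standard UCB acquisition `μ_f + √β σ_f` as `t → ∞`. -/
theorem combined_acquisition_limit (a γ σf μf μπ β : ℝ)
    (ha : 0 ≤ a) (hγ : 0 < γ) (hσf : 0 < σf) (hβ : 0 ≤ β) :
    Tendsto (fun t : ℕ =>
        let σπ2 := a + γ * (t : ℝ) ^ 2 * σf ^ 2
        let σc2 := σπ2 * σf ^ 2 / (σπ2 + σf ^ 2)
        ((σc2 / σπ2) * μπ + (σc2 / σf ^ 2) * μf) + Real.sqrt β * Real.sqrt σc2)
      atTop (nhds (μf + Real.sqrt β * σf)) := by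
  have hσ2 : (0:ℝ) < σf ^ 2 := by positivity
  set s : ℕ → ℝ := fun t => a + γ * (t : ℝ) ^ 2 * σf ^ 2 with hs
  -- s → ∞
  have hg : Tendsto s atTop atTop := by
    apply tendsto_atTop_add_const_left
    have h1 : Tendsto (fun t : ℕ => (t : ℝ) ^ 2) atTop atTop :=
      (tendsto_pow_atTop (by norm_num)).comp tendsto_natCast_atTop_atTop
    have := (h1.const_mul_atTop hγ).atTop_mul_const hσ2
    simpa [mul_assoc] using this
  have hd : Tendsto (fun t => s t + σf ^ 2) atTop atTop :=
    tendsto_atTop_add_const_right _ _ hg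
  have hspos : ∀ᶠ t in atTop, 0 < s t := hg.eventually_gt_atTop 0
  have hdpos : ∀ᶠ t in atTop, 0 < s t + σf ^ 2 := hd.eventually_gt_atTop 0
  -- limits of the pieces
  have L1 : Tendsto (fun t => (s t * σf ^ 2 / (s t + σf ^ 2)) / s t) atTop (nhds 0) := by
    have h0 : Tendsto (fun t => σf ^ 2 / (s t + σf ^ 2)) atTop (nhds 0) :=
      tendsto_const_nhds.div_atTop hd
    refine h0.congr' ?_
    filter_upwards [hspos] with t ht
    field_simp
  have L2 : Tendsto (fun t => (s t * σf ^ 2 / (s t + σf ^ 2)) / σf ^ 2) atTop (nhds 1) := by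
    have h0 : Tendsto (fun t => σf ^ 2 / (s t + σf ^ 2)) atTop (nhds 0) :=
      tendsto_const_nhds.div_atTop hd
    have h1 : Tendsto (fun t => 1 - σf ^ 2 / (s t + σf ^ 2)) atTop (nhds 1) := by
      simpa using tendsto_const_nhds.sub h0
    refine h1.congr' ?_
    filter_upwards [hdpos] with t ht
    field_simp
    ring
  have hσc : Tendsto (fun t => s t * σf ^ 2 / (s t + σf ^ 2)) atTop (nhds (σf ^ 2)) := by
    have := L2.mul_const (σf ^ 2)
    simp only [one_mul] at this
    refine this.congr' ?_
    filter_upwards with t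
    exact div_mul_cancel₀ _ (ne_of_gt hσ2)
  have L3 : Tendsto (fun t => Real.sqrt (s t * σf ^ 2 / (s t + σf ^ 2))) atTop (nhds σf) := by
    have := (Real.continuous_sqrt.tendsto (σf ^ 2)).comp hσc
    simpa [Real.sqrt_sq hσf.le, Function.comp_def] using this
  have := ((L1.mul_const μπ).add (L2.mul_const μf)).add (((tendsto_const_nhds : Tendsto (fun _ : ℕ => Real.sqrt β) atTop (nhds (Real.sqrt β)))).mul L3)
  simp only [zero_mul, one_mul, zero_add] at this
  exact Tendsto.congr (fun t => rfl) this
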